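/- Let s ∈ (0,1), p > 1, D ⊂ ℝ^N a bounded open set, and u ∈ W̃^{s,p}(D) with u ≥ 0 on ℝ^N \ D. Then the negative part u^- belongs to W^{s,p}(ℝ^N) and vanishes on ℝ^N \ D, i.e. u^- ∈ 𝒲^{s,p}_0(D). -/

import Mathlib

open MeasureTheory

/-- Gagliardo-type seminorm `∫_D ∫_{ℝ^N} |u(x)-u(y)|^p / |x-y|^{N+sp} dx dy` (as an
extended nonnegative real). -/
noncomputable def gagliardo (N : ℕ) (s p : ℝ) (D : Set (EuclideanSpace ℝ (Fin N)))
    (u : EuclideanSpace ℝ (Fin N) → ℝ) : ENNReal :=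
  ∫⁻ x in D, ∫⁻ y, ENNReal.ofReal (|u x - u y| ^ p / ‖x - y‖ ^ ((N : ℝ) + s * p))

/-- `u ∈ L^p_loc(ℝ^N)`. -/
def memLpLoc (N : ℕ) (p : ℝ) (u : EuclideanSpace ℝ (Fin N) → ℝ) : Prop :=
  ∀ K : Set (EuclideanSpace ℝ (Fin N)), IsCompact K →
    ∫⁻ x in K, ENNReal.ofReal (|u x| ^ p) < ⊤

/-- Membership in `W̃^{s,p}(D)`. -/
def memWtilde (N : ℕ) (s p : ℝ) (D : Set (EuclideanSpace ℝ (Fin N)))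
    (u : EuclideanSpace ℝ (Fin N) → ℝ) : Prop :=
  memLpLoc N p u ∧ gagliardo N s p D u < ⊤

/-- If the (lower) Lebesgue integral of `w` vanishes, then so does that of `w * k`
for any everywhere-finite measurable `k`. -/
lemma lintegral_mul_right_eq_zero {α : Type*} [MeasurableSpace α] {μ : Measure α}
    {w k : α → ENNReal} (hk : Measurable k) (hkfin : ∀ y, k y ≠ ⊤)
    (hw : ∫⁻ y, w y ∂μ = 0) : ∫⁻ y, w y * k y ∂μ = 0 := by
  obtain ⟨g, gmeas, gle, hg⟩ := exists_measurable_le_lintegral_eq μ (fun y => w y * k y)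
  rw [hg]
  have mle : ∀ y, g y / k y ≤ w y := by
    intro y
    rcases eq_or_ne (k y) 0 with h0 | h0
    · have hgy : g y = 0 := le_antisymm (by simpa [h0] using gle y) (zero_le)
      simp [hgy]
    · calc g y / k y ≤ w y * k y / k y := ENNReal.div_le_div_right (gle y) _
        _ = w y * (k y / k y) := by rw [mul_div_assoc]
        _ = w y := by rw [ENNReal.div_self h0 (hkfin y), mul_one]
  have hm0 : ∫⁻ y, g y / k y ∂μ = 0 :=
    le_antisymm (hw ▸ lintegral_mono mle) (zero_le)
  have hmae : (fun y => g y / k y) =ᵐ[μ] 0 :=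
    (lintegral_eq_zero_iff (gmeas.div hk)).1 hm0
  have gae : g =ᵐ[μ] 0 := by
    filter_upwards [hmae] with y hy
    rcases eq_or_ne (k y) 0 with h0 | h0
    · exact le_antisymm (by simpa [h0] using gle y) (zero_le)
    · have hy' : g y / k y = 0 := hy
      rcases ENNReal.div_eq_zero_iff.mp hy' with h | h
      · exact h
      · exact absurd h (hkfin y)
  rw [lintegral_congr_ae gae]
  simp

set_option maxHeartbeats 1000000 in
theorem stmt10 (N : ℕ) (s p : ℝ) (hs : s ∈ Set.Ioo (0:ℝ) 1) (hp : 1 < p)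
    (D : Set (EuclideanSpace ℝ (Fin N))) (hD : IsOpen D)
    (hDb : Bornology.IsBounded D)
    (u : EuclideanSpace ℝ (Fin N) → ℝ) (hu : memWtilde N s p D u)
    (hu0 : ∀ x, x ∉ D → 0 ≤ u x) :
    (∫⁻ x, ENNReal.ofReal (|(-min (u x) 0)| ^ p) < ⊤) ∧
    gagliardo N s p Set.univ (fun x => -min (u x) 0) < ⊤ ∧
    (∀ x, x ∉ D → -min (u x) 0 = 0) := by
  obtain ⟨huloc, hugag⟩ := hu
  have hp0 : (0:ℝ) < p := lt_trans zero_lt_one hp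
  have hpne : p ≠ 0 := ne_of_gt hp0
  have hDm : MeasurableSet D := hD.measurableSet
  have he0 : (0:ℝ) ≤ (N:ℝ) + s * p :=
    add_nonneg (Nat.cast_nonneg N) (mul_nonneg hs.1.le hp0.le)
  -- the negative part
  have hv0 : ∀ x, 0 ≤ -min (u x) 0 := fun x => by
    rw [neg_nonneg]; exact min_le_right _ _
  have hvD : ∀ x, x ∉ D → -min (u x) 0 = 0 := fun x hx => by
    rw [min_eq_right (hu0 x hx), neg_zero]
  have hvleu : ∀ x, |(-min (u x) 0)| ≤ |u x| := by
    intro x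
    rw [abs_neg]
    rcases le_total (u x) 0 with h | h
    · rw [min_eq_left h]
    · rw [min_eq_right h]; simp [abs_nonneg]
  have hvlip : ∀ x y, |(-min (u x) 0) - (-min (u y) 0)| ≤ |u x - u y| := by
    intro x y
    have : (-min (u x) 0) - (-min (u y) 0) = -(min (u x) 0 - min (u y) 0) := by ring
    rw [this, abs_neg]
    have h := abs_min_sub_min_le_max (u x) 0 (u y) 0
    simpa using h
  -- kernel and density
  have hKmeas2 : Measurable (fun q : EuclideanSpace ℝ (Fin N) × EuclideanSpace ℝ (Fin N) =>
      ENNReal.ofReal ((‖q.1 - q.2‖ ^ ((N : ℝ) + s * p))⁻¹)) := by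
    apply Measurable.ennreal_ofReal
    apply Measurable.inv
    exact ((continuous_fst.sub continuous_snd).norm.rpow_const
      (fun _ => Or.inr he0)).measurable
  have hKmeas : ∀ x : EuclideanSpace ℝ (Fin N), Measurable (fun y =>
      ENNReal.ofReal ((‖x - y‖ ^ ((N : ℝ) + s * p))⁻¹)) := by
    intro x
    apply Measurable.ennreal_ofReal
    apply Measurable.inv
    exact ((continuous_const.sub continuous_id).norm.rpow_const
      (fun _ => Or.inr he0)).measurable
  -- Part 1 ingredients
  have part1D : ∫⁻ x in D, ENNReal.ofReal (|(-min (u x) 0)| ^ p) < ⊤ := by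
    calc ∫⁻ x in D, ENNReal.ofReal (|(-min (u x) 0)| ^ p)
        ≤ ∫⁻ x in D, ENNReal.ofReal (|u x| ^ p) := by
          refine lintegral_mono fun x => ?_
          exact ENNReal.ofReal_le_ofReal
            (Real.rpow_le_rpow (abs_nonneg _) (hvleu x) hp0.le)
      _ ≤ ∫⁻ x in closure D, ENNReal.ofReal (|u x| ^ p) :=
          lintegral_mono' (Measure.restrict_mono subset_closure le_rfl) le_rfl
      _ < ⊤ := huloc _ hDb.isCompact_closure
  have part1Dc : ∫⁻ x in Dᶜ, ENNReal.ofReal (|(-min (u x) 0)| ^ p) = 0 := by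
    have hz : ∀ x ∈ Dᶜ, ENNReal.ofReal (|(-min (u x) 0)| ^ p) = (0:ENNReal) := by
      intro x hx
      rw [hvD x hx]
      simp [Real.zero_rpow hpne]
    calc ∫⁻ x in Dᶜ, ENNReal.ofReal (|(-min (u x) 0)| ^ p)
        = ∫⁻ _ in Dᶜ, (0:ENNReal) := setLIntegral_congr_fun hDm.compl hz
      _ = 0 := lintegral_zero
  have part1 : ∫⁻ x, ENNReal.ofReal (|(-min (u x) 0)| ^ p) < ⊤ := by
    rw [← lintegral_add_compl (fun x => ENNReal.ofReal (|(-min (u x) 0)| ^ p)) hDm]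
    rw [part1Dc, add_zero]
    exact part1D
  refine ⟨part1, ?_, hvD⟩
  -- Part 2
  -- measurable minorant of the density of |u⁻|^p on D
  obtain ⟨h₀, h₀meas, h₀le, h₀eq⟩ := exists_measurable_le_lintegral_eq
    (volume.restrict D) (fun y => ENNReal.ofReal (|(-min (u y) 0)| ^ p))
  have h₀fin : ∀ y, h₀ y ≠ ⊤ := fun y =>
    ne_top_of_le_ne_top ENNReal.ofReal_ne_top (h₀le y)
  have hwzero : ∫⁻ y in D, (ENNReal.ofReal (|(-min (u y) 0)| ^ p) - h₀ y) ∂volume = 0 := by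
    have hsplit : ∫⁻ y in D, (h₀ y + (ENNReal.ofReal (|(-min (u y) 0)| ^ p) - h₀ y)) ∂volume
        = ∫⁻ y in D, h₀ y ∂volume
          + ∫⁻ y in D, (ENNReal.ofReal (|(-min (u y) 0)| ^ p) - h₀ y) ∂volume :=
      lintegral_add_left h₀meas _
    have hcancel : ∀ y, h₀ y + (ENNReal.ofReal (|(-min (u y) 0)| ^ p) - h₀ y)
        = ENNReal.ofReal (|(-min (u y) 0)| ^ p) := fun y => add_tsub_cancel_of_le (h₀le y)
    rw [lintegral_congr hcancel] at hsplit
    have hfin : ∫⁻ y in D, h₀ y ∂volume ≠ ⊤ := by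
      rw [← h₀eq]; exact part1D.ne
    have key : ∫⁻ y in D, h₀ y ∂volume
          + ∫⁻ y in D, (ENNReal.ofReal (|(-min (u y) 0)| ^ p) - h₀ y) ∂volume
        = ∫⁻ y in D, h₀ y ∂volume + 0 := by
      rw [add_zero, ← hsplit]
      exact h₀eq
    exact (ENNReal.add_right_inj hfin).mp key
  -- pointwise facts in ENNReal
  -- for x ∉ D the integrand of the Gagliardo seminorm of u⁻ factors
  have hfact : ∀ x, x ∉ D → ∀ y,
      ENNReal.ofReal (|(-min (u x) 0) - (-min (u y) 0)| ^ p / ‖x - y‖ ^ ((N : ℝ) + s * p))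
        = ENNReal.ofReal (|(-min (u y) 0)| ^ p)
          * ENNReal.ofReal ((‖x - y‖ ^ ((N : ℝ) + s * p))⁻¹) := by
    intro x hx y
    rw [hvD x hx, zero_sub, abs_neg, div_eq_mul_inv,
      ENNReal.ofReal_mul (Real.rpow_nonneg (abs_nonneg _) p)]
  -- inner integral over y for x ∉ D reduces to an integral over D
  have hinner : ∀ x, x ∉ D →
      (∫⁻ y, ENNReal.ofReal
          (|(-min (u x) 0) - (-min (u y) 0)| ^ p / ‖x - y‖ ^ ((N : ℝ) + s * p)))
        = ∫⁻ y in D, ENNReal.ofReal (|(-min (u y) 0)| ^ p)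
            * ENNReal.ofReal ((‖x - y‖ ^ ((N : ℝ) + s * p))⁻¹) := by
    intro x hx
    rw [← lintegral_indicator hDm]
    refine lintegral_congr fun y => ?_
    rw [hfact x hx y]
    by_cases hy : y ∈ D
    · rw [Set.indicator_of_mem hy]
    · rw [Set.indicator_of_notMem hy, hvD y hy]
      simp [Real.zero_rpow hpne]
  -- the inner integral is bounded by the measurable-minorant integral
  have hinnerle : ∀ x, x ∉ D →
      (∫⁻ y, ENNReal.ofReal
          (|(-min (u x) 0) - (-min (u y) 0)| ^ p / ‖x - y‖ ^ ((N : ℝ) + s * p)))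
        ≤ ∫⁻ y in D, h₀ y * ENNReal.ofReal ((‖x - y‖ ^ ((N : ℝ) + s * p))⁻¹) := by
    intro x hx
    rw [hinner x hx]
    have hle : ∀ y, ENNReal.ofReal (|(-min (u y) 0)| ^ p)
        * ENNReal.ofReal ((‖x - y‖ ^ ((N : ℝ) + s * p))⁻¹)
        ≤ h₀ y * ENNReal.ofReal ((‖x - y‖ ^ ((N : ℝ) + s * p))⁻¹)
          + (ENNReal.ofReal (|(-min (u y) 0)| ^ p) - h₀ y)
            * ENNReal.ofReal ((‖x - y‖ ^ ((N : ℝ) + s * p))⁻¹) := by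
      intro y
      rw [← add_mul, add_tsub_cancel_of_le (h₀le y)]
    calc ∫⁻ y in D, ENNReal.ofReal (|(-min (u y) 0)| ^ p)
            * ENNReal.ofReal ((‖x - y‖ ^ ((N : ℝ) + s * p))⁻¹)
        ≤ ∫⁻ y in D, (h₀ y * ENNReal.ofReal ((‖x - y‖ ^ ((N : ℝ) + s * p))⁻¹)
            + (ENNReal.ofReal (|(-min (u y) 0)| ^ p) - h₀ y)
              * ENNReal.ofReal ((‖x - y‖ ^ ((N : ℝ) + s * p))⁻¹)) :=
          lintegral_mono hle
      _ = (∫⁻ y in D, h₀ y * ENNReal.ofReal ((‖x - y‖ ^ ((N : ℝ) + s * p))⁻¹))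
            + ∫⁻ y in D, (ENNReal.ofReal (|(-min (u y) 0)| ^ p) - h₀ y)
              * ENNReal.ofReal ((‖x - y‖ ^ ((N : ℝ) + s * p))⁻¹) :=
          lintegral_add_left (h₀meas.mul (hKmeas x)) _
      _ = ∫⁻ y in D, h₀ y * ENNReal.ofReal ((‖x - y‖ ^ ((N : ℝ) + s * p))⁻¹) := by
          rw [lintegral_mul_right_eq_zero (hKmeas x)
            (fun y => ENNReal.ofReal_ne_top) hwzero, add_zero]
  -- Tonelli for the measurable part
  have htonelli : ∫⁻ x in Dᶜ, ∫⁻ y in D,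
        h₀ y * ENNReal.ofReal ((‖x - y‖ ^ ((N : ℝ) + s * p))⁻¹)
      = ∫⁻ y in D, h₀ y * ∫⁻ x in Dᶜ, ENNReal.ofReal ((‖x - y‖ ^ ((N : ℝ) + s * p))⁻¹) := by
    rw [lintegral_lintegral_swap]
    · refine lintegral_congr fun y => ?_
      exact lintegral_const_mul' _ _ (h₀fin y)
    · exact ((h₀meas.comp measurable_snd).mul hKmeas2).aemeasurable
  -- flip the kernel via symmetry
  have hsymm : ∀ y, (∫⁻ x in Dᶜ, ENNReal.ofReal ((‖x - y‖ ^ ((N : ℝ) + s * p))⁻¹))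
      = ∫⁻ z in Dᶜ, ENNReal.ofReal ((‖y - z‖ ^ ((N : ℝ) + s * p))⁻¹) := by
    intro y
    refine lintegral_congr fun x => ?_
    rw [norm_sub_rev]
  -- bound the h₀-integral by the Gagliardo seminorm of u
  have hgagbound : ∫⁻ y in D, h₀ y
        * ∫⁻ z in Dᶜ, ENNReal.ofReal ((‖y - z‖ ^ ((N : ℝ) + s * p))⁻¹)
      ≤ gagliardo N s p D u := by
    refine lintegral_mono_ae ?_
    filter_upwards [ae_restrict_mem hDm] with x hxD
    calc h₀ x * ∫⁻ z in Dᶜ, ENNReal.ofReal ((‖x - z‖ ^ ((N : ℝ) + s * p))⁻¹)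
        ≤ ENNReal.ofReal (|(-min (u x) 0)| ^ p)
            * ∫⁻ z in Dᶜ, ENNReal.ofReal ((‖x - z‖ ^ ((N : ℝ) + s * p))⁻¹) := by
          exact mul_le_mul_left (h₀le x) _
      _ = ∫⁻ z in Dᶜ, ENNReal.ofReal (|(-min (u x) 0)| ^ p)
            * ENNReal.ofReal ((‖x - z‖ ^ ((N : ℝ) + s * p))⁻¹) :=
          (lintegral_const_mul' _ _ ENNReal.ofReal_ne_top).symm
      _ ≤ ∫⁻ z in Dᶜ, ENNReal.ofReal
            (|u x - u z| ^ p / ‖x - z‖ ^ ((N : ℝ) + s * p)) := by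
          refine lintegral_mono_ae ?_
          filter_upwards [ae_restrict_mem hDm.compl] with z hz
          rw [← ENNReal.ofReal_mul (Real.rpow_nonneg (abs_nonneg _) p), ← div_eq_mul_inv]
          refine ENNReal.ofReal_le_ofReal ?_
          have habs : |(-min (u x) 0)| ≤ |u x - u z| := by
            rw [abs_of_nonneg (hv0 x)]
            rcases le_total (u x) 0 with h | h
            · rw [min_eq_left h]
              have : u x - u z ≤ u x := by linarith [hu0 z hz]
              rw [abs_sub_comm]
              calc -u x ≤ u z - u x := by linarith [hu0 z hz]
                _ ≤ |u z - u x| := le_abs_self _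
            · rw [min_eq_right h, neg_zero]
              exact abs_nonneg _
          have hnum : |(-min (u x) 0)| ^ p ≤ |u x - u z| ^ p :=
            Real.rpow_le_rpow (abs_nonneg _) habs hp0.le
          rw [div_eq_mul_inv]
          exact mul_le_mul_of_nonneg_right hnum
            (inv_nonneg.mpr (Real.rpow_nonneg (norm_nonneg _) _))
      _ ≤ ∫⁻ z, ENNReal.ofReal
            (|u x - u z| ^ p / ‖x - z‖ ^ ((N : ℝ) + s * p)) :=
          lintegral_mono' Measure.restrict_le_self le_rfl
  -- Part 2: the full estimate
  have hugag' : ∫⁻ x in D, ∫⁻ y, ENNReal.ofReal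
      (|u x - u y| ^ p / ‖x - y‖ ^ ((N : ℝ) + s * p)) < ⊤ := hugag
  have hDpart : ∫⁻ x in D, ∫⁻ y, ENNReal.ofReal
      (|(-min (u x) 0) - (-min (u y) 0)| ^ p / ‖x - y‖ ^ ((N : ℝ) + s * p)) < ⊤ := by
    refine lt_of_le_of_lt ?_ hugag'
    refine lintegral_mono fun x => lintegral_mono fun y => ?_
    refine ENNReal.ofReal_le_ofReal ?_
    rw [div_eq_mul_inv, div_eq_mul_inv]
    refine mul_le_mul_of_nonneg_right ?_
      (inv_nonneg.mpr (Real.rpow_nonneg (norm_nonneg _) _))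
    exact Real.rpow_le_rpow (abs_nonneg _) (hvlip x y) hp0.le
  have hDcpart : ∫⁻ x in Dᶜ, ∫⁻ y, ENNReal.ofReal
      (|(-min (u x) 0) - (-min (u y) 0)| ^ p / ‖x - y‖ ^ ((N : ℝ) + s * p)) < ⊤ := by
    have step1 : ∫⁻ x in Dᶜ, ∫⁻ y, ENNReal.ofReal
        (|(-min (u x) 0) - (-min (u y) 0)| ^ p / ‖x - y‖ ^ ((N : ℝ) + s * p))
        ≤ ∫⁻ x in Dᶜ, ∫⁻ y in D,
            h₀ y * ENNReal.ofReal ((‖x - y‖ ^ ((N : ℝ) + s * p))⁻¹) := by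
      refine lintegral_mono_ae ?_
      filter_upwards [ae_restrict_mem hDm.compl] with x hx
      exact hinnerle x hx
    refine lt_of_le_of_lt step1 ?_
    rw [htonelli]
    have : ∫⁻ y in D, h₀ y * ∫⁻ x in Dᶜ, ENNReal.ofReal ((‖x - y‖ ^ ((N : ℝ) + s * p))⁻¹)
        = ∫⁻ y in D, h₀ y * ∫⁻ z in Dᶜ, ENNReal.ofReal ((‖y - z‖ ^ ((N : ℝ) + s * p))⁻¹) := by
      refine lintegral_congr fun y => ?_
      rw [hsymm y]
    rw [this]
    exact lt_of_le_of_lt hgagbound hugag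
  show (∫⁻ x in Set.univ, ∫⁻ y, ENNReal.ofReal
      (|(-min (u x) 0) - (-min (u y) 0)| ^ p / ‖x - y‖ ^ ((N : ℝ) + s * p))) < ⊤
  rw [Measure.restrict_univ]
  rw [← lintegral_add_compl (fun x => ∫⁻ y, ENNReal.ofReal
      (|(-min (u x) 0) - (-min (u y) 0)| ^ p / ‖x - y‖ ^ ((N : ℝ) + s * p))) hDm]
  exact ENNReal.add_lt_top.mpr ⟨hDpart, hDcpart⟩
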